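/- Let x_1, …, x_m ∈ [0,1] be fixed and let b_1, …, b_m be independent random variables with b_i ∼ Bernoulli(x_i). Then E[ b_1 / max(1, Σ_{j=1}^m b_j) ] = ∫_0^1 x_1 · ∏_{j=2}^m ( x_j s + (1 − x_j) ) ds. -/

import Mathlib

open MeasureTheory ProbabilityTheory

set_option maxHeartbeats 1000000 in
/-- For independent Bernoulli variables `b i ∼ Bern(x i)` (encoded as `{0,1}`-valued random
variables with `P(b i = 1) = x i`),
`E[ b₁ / max(1, ∑ⱼ bⱼ) ] = ∫₀¹ x₁ · ∏_{j ≠ 1} (x j · s + (1 - x j)) ds`. -/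
theorem stmt_10 {Ω : Type*} [MeasureSpace Ω] [IsProbabilityMeasure (volume : Measure Ω)]
    (m : ℕ) (hm : 0 < m)
    (x : Fin m → ℝ) (hx : ∀ i, x i ∈ Set.Icc (0 : ℝ) 1)
    (b : Fin m → Ω → ℕ)
    (hb01 : ∀ i ω, b i ω = 0 ∨ b i ω = 1)
    (hbmeas : ∀ i, Measurable (b i))
    (hindep : iIndepFun b volume)
    (hBer : ∀ i, volume {ω | b i ω = 1} = ENNReal.ofReal (x i)) :
    ∫ ω, (b ⟨0, hm⟩ ω : ℝ) / max 1 (∑ j, (b j ω : ℝ)) ∂volume =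
      ∫ s in (0 : ℝ)..1, x ⟨0, hm⟩ * ∏ j ∈ Finset.univ.erase ⟨0, hm⟩, (x j * s + (1 - x j)) := by
  classical
  set i0 : Fin m := ⟨0, hm⟩ with hi0def
  set E : Finset (Fin m) := Finset.univ.erase i0 with hEdef
  -- events
  set A : Finset (Fin m) → Set Ω :=
    fun s => ⋂ i, b i ⁻¹' {if i ∈ s then 1 else 0} with hAdef
  have hAmeas : ∀ s, MeasurableSet (A s) := fun s =>
    MeasurableSet.iInter fun i => (hbmeas i) (measurableSet_singleton _)
  -- coefficient
  set c : Finset (Fin m) → ℝ :=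
    fun s => (if i0 ∈ s then (1:ℝ) else 0) / max 1 (s.card : ℝ) with hcdef
  -- probabilities of single events
  have h1 : ∀ i, volume (b i ⁻¹' {1}) = ENNReal.ofReal (x i) := by
    intro i; rw [← hBer i]; rfl
  have hxle : ∀ i, ENNReal.ofReal (x i) ≤ 1 := fun i => by
    simpa using ENNReal.ofReal_le_ofReal (hx i).2
  have h0 : ∀ i, volume (b i ⁻¹' {0}) = 1 - ENNReal.ofReal (x i) := by
    intro i
    have hc : b i ⁻¹' {0} = (b i ⁻¹' {1})ᶜ := by
      ext ω
      simp only [Set.mem_preimage, Set.mem_singleton_iff, Set.mem_compl_iff]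
      rcases hb01 i ω with h | h <;> simp [h]
    rw [hc, measure_compl ((hbmeas i) (measurableSet_singleton _)) (measure_ne_top _ _),
      measure_univ, h1]
  have hPreal : ∀ s : Finset (Fin m), (volume (A s)).toReal
      = ∏ i, (if i ∈ s then x i else 1 - x i) := by
    intro s
    have hAm : volume (A s) = ∏ i, volume (b i ⁻¹' {if i ∈ s then 1 else 0}) :=
      hindep.meas_iInter fun i => ⟨{if i ∈ s then 1 else 0}, measurableSet_singleton _, rfl⟩
    rw [hAm, ENNReal.toReal_prod]
    refine Finset.prod_congr rfl fun i _ => ?_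
    by_cases h : i ∈ s
    · simp [h, h1 i, ENNReal.toReal_ofReal (hx i).1]
    · simp only [h, if_false]
      rw [h0 i, ENNReal.toReal_sub_of_le (hxle i) ENNReal.one_ne_top,
        ENNReal.toReal_one, ENNReal.toReal_ofReal (hx i).1]
  -- the set of indices where b is one
  set sOf : Ω → Finset (Fin m) := fun ω => Finset.univ.filter (fun i => b i ω = 1) with hsOf
  have hmem : ∀ ω s, ω ∈ A s ↔ s = sOf ω := by
    intro ω s
    constructor
    · intro h
      have h' : ∀ i, b i ω = if i ∈ s then 1 else 0 := by
        intro i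
        have := Set.mem_iInter.mp h i
        simpa using this
      ext i
      simp only [hsOf, Finset.mem_filter, Finset.mem_univ, true_and]
      by_cases hi : i ∈ s <;> simp [h' i, hi]
    · rintro rfl
      refine Set.mem_iInter.mpr fun i => ?_
      simp only [Set.mem_preimage, Set.mem_singleton_iff, hsOf, Finset.mem_filter,
        Finset.mem_univ, true_and]
      rcases hb01 i ω with h | h <;> simp [h]
  -- pointwise decomposition
  have hpt : ∀ ω, (b i0 ω : ℝ) / max 1 (∑ j, (b j ω : ℝ))
      = ∑ s : Finset (Fin m), Set.indicator (A s) (fun _ => c s) ω := by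
    intro ω
    have hiv : ∀ s : Finset (Fin m),
        Set.indicator (A s) (fun _ => c s) ω = if s = sOf ω then c s else 0 := by
      intro s
      by_cases h : ω ∈ A s
      · rw [Set.indicator_of_mem h, if_pos ((hmem ω s).mp h)]
      · rw [Set.indicator_of_notMem h, if_neg (fun hs => h ((hmem ω s).mpr hs))]
    rw [Finset.sum_congr rfl fun s _ => hiv s, Finset.sum_ite_eq' Finset.univ (sOf ω),
      if_pos (Finset.mem_univ _)]
    have hb : ∀ i, b i ω = if i ∈ sOf ω then 1 else 0 := by
      intro i
      simp only [hsOf, Finset.mem_filter, Finset.mem_univ, true_and]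
      rcases hb01 i ω with h | h <;> simp [h]
    have hsum : (∑ j, (b j ω : ℝ)) = ((sOf ω).card : ℝ) := by
      have hcast : ∀ j, (b j ω : ℝ) = if j ∈ sOf ω then 1 else 0 := by
        intro j; rw [hb j]; split <;> simp
      rw [Finset.sum_congr rfl fun j _ => hcast j, Finset.sum_ite_mem,
        Finset.univ_inter, Finset.sum_const, nsmul_eq_mul, mul_one]
    rw [hsum, hb i0, hcdef]
    by_cases h : i0 ∈ sOf ω <;> simp [h]
  rw [integral_congr_ae (Filter.Eventually.of_forall hpt)]
  rw [integral_finset_sum _ (fun s _ => (integrable_const (c s)).indicator (hAmeas s))]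
  have hLHS : ∀ s : Finset (Fin m), ∫ ω, Set.indicator (A s) (fun _ => c s) ω
      = c s * (volume (A s)).toReal := by
    intro s
    rw [integral_indicator_const _ (hAmeas s), smul_eq_mul, mul_comm, measureReal_def]
  simp only [hLHS]
  -- compute the RHS
  have hRHS : (∫ s in (0:ℝ)..1, x i0 * ∏ j ∈ E, (x j * s + (1 - x j)))
      = ∑ t ∈ E.powerset,
          x i0 * ((∏ j ∈ t, x j) * (∏ j ∈ E \ t, (1 - x j)) / ((t.card : ℝ) + 1)) := by
    have hexp : ∀ s : ℝ, x i0 * ∏ j ∈ E, (x j * s + (1 - x j))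
        = ∑ t ∈ E.powerset,
            (x i0 * ((∏ j ∈ t, x j) * (∏ j ∈ E \ t, (1 - x j)))) * s ^ t.card := by
      intro s
      rw [Finset.prod_add, Finset.mul_sum]
      refine Finset.sum_congr rfl fun t _ => ?_
      rw [Finset.prod_mul_distrib, Finset.prod_const]
      ring
    rw [intervalIntegral.integral_congr (fun s _ => hexp s),
      intervalIntegral.integral_finset_sum (fun t _ => by
        apply Continuous.intervalIntegrable; continuity)]
    refine Finset.sum_congr rfl fun t _ => ?_
    rw [intervalIntegral.integral_const_mul, integral_pow]
    have : ((t.card : ℝ) + 1) ≠ 0 := by positivity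
    field_simp
    simp
  rw [hRHS]
  -- now match the two finite sums
  have hzero : ∀ s : Finset (Fin m), i0 ∉ s → c s * (volume (A s)).toReal = 0 := by
    intro s hs; simp [hcdef, hs]
  have hfil : ∀ s ∈ (Finset.univ : Finset (Finset (Fin m))),
      c s * (volume (A s)).toReal ≠ 0 → i0 ∈ s := by
    intro s _ h
    by_contra hs
    exact h (hzero s hs)
  rw [← Finset.sum_filter_of_ne hfil]
  refine Finset.sum_nbij' (fun s => s.erase i0) (fun t => insert i0 t) ?_ ?_ ?_ ?_ ?_
  · intro s hs
    simp only [Finset.mem_powerset]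
    intro i hi
    simp only [hEdef, Finset.mem_erase, Finset.mem_univ, and_true]
    exact (Finset.mem_erase.mp hi).1
  · intro t ht
    simp only [Finset.mem_filter, Finset.mem_univ, true_and]
    exact Finset.mem_insert_self _ _
  · intro s hs
    have hi0s : i0 ∈ s := (Finset.mem_filter.mp hs).2
    exact Finset.insert_erase hi0s
  · intro t ht
    have hti0 : i0 ∉ t := by
      intro h
      have := Finset.mem_powerset.mp ht h
      exact (Finset.mem_erase.mp this).1 rfl
    exact Finset.erase_insert hti0
  · intro s hs
    have hi0s : i0 ∈ s := (Finset.mem_filter.mp hs).2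
    set t := s.erase i0 with htdef
    have hts : t ⊆ E := fun i hi => by
      simp only [hEdef, Finset.mem_erase, Finset.mem_univ, and_true]
      exact (Finset.mem_erase.mp hi).1
    have hcard : s.card = t.card + 1 := by
      have h1 : 0 < s.card := Finset.card_pos.mpr ⟨i0, hi0s⟩
      rw [htdef, Finset.card_erase_of_mem hi0s]
      omega
    have hcs : c s = 1 / ((t.card : ℝ) + 1) := by
      rw [hcdef]
      simp only [hi0s, if_true, hcard]
      rw [max_eq_right (by
        push_cast
        linarith [show (0:ℝ) ≤ (t.card : ℝ) from Nat.cast_nonneg _])]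
      push_cast
      ring_nf
    have hprod : ∏ i, (if i ∈ s then x i else 1 - x i)
        = x i0 * ((∏ j ∈ t, x j) * (∏ j ∈ E \ t, (1 - x j))) := by
      rw [← Finset.mul_prod_erase Finset.univ _ (Finset.mem_univ i0), if_pos hi0s, ← hEdef]
      congr 1
      rw [← Finset.prod_sdiff hts]
      rw [mul_comm]
      congr 1
      · refine Finset.prod_congr rfl fun i hi => ?_
        have : i ∈ s := Finset.mem_of_mem_erase (htdef ▸ hi)
        simp [this]
      · refine Finset.prod_congr rfl fun i hi => ?_
        have hiE := (Finset.mem_sdiff.mp hi).1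
        have hit := (Finset.mem_sdiff.mp hi).2
        have : i ∉ s := by
          intro h
          exact hit (Finset.mem_erase.mpr ⟨(Finset.mem_erase.mp hiE).1, h⟩)
        simp [this]
    rw [hPreal, hcs, hprod]
    ring
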